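/- arXiv:math/0505201 — 6 statements merged into one kernel-verified Lean document; each statement's English description precedes it below -/
import Mathlib

section
/- If (x, y, z) : ℝ → ℂ (or ℂ → ℂ) satisfies the system dx/dt = x(t - x - 2z) + α₁, dy/dt = y(-t + y + 2z) + α₂, dz/dt = z(t - 2y - z) + α₃, and z(t) ≠ 0 on the domain, then the functions X = x, Y = y - α₃/z, Z = z satisfy the same system with parameters (α₁, α₂ + α₃, -α₃). -/
/-- The transformation s₁ : (x,y,z,t;α₁,α₂,α₃) ↦ (x, y-α₃/z, z, t; α₁, α₂+α₃, -α₃)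
preserves the third-order system. -/
theorem s1_symmetry (α₁ α₂ α₃ : ℂ) (x y z : ℂ → ℂ) (s : Set ℂ)
    (hz0 : ∀ t ∈ s, z t ≠ 0)
    (hx : ∀ t ∈ s, HasDerivAt x (x t * (t - x t - 2 * z t) + α₁) t)
    (hy : ∀ t ∈ s, HasDerivAt y (y t * (-t + y t + 2 * z t) + α₂) t)
    (hz : ∀ t ∈ s, HasDerivAt z (z t * (t - 2 * y t - z t) + α₃) t) :
    ∀ t ∈ s,
      HasDerivAt x (x t * (t - x t - 2 * z t) + α₁) t ∧
      HasDerivAt (fun τ => y τ - α₃ / z τ)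
        ((y t - α₃ / z t) * (-t + (y t - α₃ / z t) + 2 * z t) + (α₂ + α₃)) t ∧
      HasDerivAt z (z t * (t - 2 * (y t - α₃ / z t) - z t) + (-α₃)) t := by
  intro t ht
  have hzt := hz0 t ht
  refine ⟨hx t ht, ?_, ?_⟩
  · have hq : HasDerivAt (fun τ => α₃ / z τ)
        ((0 * z t - α₃ * (z t * (t - 2 * y t - z t) + α₃)) / z t ^ 2) t :=
      (hasDerivAt_const t α₃).div (hz t ht) hzt
    have h : HasDerivAt (fun τ => y τ - α₃ / z τ) _ t := (hy t ht).sub hq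
    convert h using 1
    field_simp
    ring
  · convert hz t ht using 1
    field_simp
    ring
end

section
/- If (x, y, z) satisfies the system dx/dt = x(t - x - 2z) + α₁, dy/dt = y(-t + y + 2z) + α₂, dz/dt = z(t - 2y - z) + α₃, and y(t) ≠ 0 on the domain, then the functions X = x - α₂/y, Y = y, Z = z + α₂/y satisfy the same system with parameters (α₁ + α₂, -α₂, α₃ + α₂). -/
/-- The transformation s₂ : (x,y,z,t;α₁,α₂,α₃) ↦ (x-α₂/y, y, z+α₂/y, t; α₁+α₂, -α₂, α₃+α₂)
preserves the third-order system. -/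
theorem s2_symmetry (α₁ α₂ α₃ : ℂ) (x y z : ℂ → ℂ) (s : Set ℂ)
    (hy0 : ∀ t ∈ s, y t ≠ 0)
    (hx : ∀ t ∈ s, HasDerivAt x (x t * (t - x t - 2 * z t) + α₁) t)
    (hy : ∀ t ∈ s, HasDerivAt y (y t * (-t + y t + 2 * z t) + α₂) t)
    (hz : ∀ t ∈ s, HasDerivAt z (z t * (t - 2 * y t - z t) + α₃) t) :
    ∀ t ∈ s,
      HasDerivAt (fun τ => x τ - α₂ / y τ)
        ((x t - α₂ / y t) * (t - (x t - α₂ / y t) - 2 * (z t + α₂ / y t)) + (α₁ + α₂)) t ∧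
      HasDerivAt y (y t * (-t + y t + 2 * (z t + α₂ / y t)) + (-α₂)) t ∧
      HasDerivAt (fun τ => z τ + α₂ / y τ)
        ((z t + α₂ / y t) * (t - 2 * y t - (z t + α₂ / y t)) + (α₃ + α₂)) t := by
  intro t ht
  have hyne := hy0 t ht
  have hq : HasDerivAt (fun τ => α₂ / y τ)
      ((0 * y t - α₂ * (y t * (-t + y t + 2 * z t) + α₂)) / (y t) ^ 2) t :=
    (hasDerivAt_const t α₂).div (hy t ht) hyne
  refine ⟨?_, ?_, ?_⟩
  · have := ((hx t ht).sub hq : HasDerivAt (fun τ => x τ - α₂ / y τ) _ t)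
    refine this.congr_deriv ?_
    field_simp
    ring
  · convert hy t ht using 1
    field_simp
    ring
  · have := ((hz t ht).add hq : HasDerivAt (fun τ => z τ + α₂ / y τ) _ t)
    refine this.congr_deriv ?_
    field_simp
    ring
end

section
/- Let (x,y,z) satisfy dx/dt = x(t-x-2z)+α₁, dy/dt = y(-t+y+2z)+α₂, dz/dt = z(t-2y-z)+α₃ with z nowhere zero. Define x₁ = 1/(x+z), y₁ = (yz + α₂)z, z₁ = 1/z (assuming also x + z nowhere zero). Then (x₁, y₁, z₁) satisfies a system of ODEs whose right-hand sides are polynomials in (x₁, y₁, z₁, t); i.e., dx₁/dt, dy₁/dt, dz₁/dt are each equal to a polynomial expression in x₁, y₁, z₁, t with coefficients depending polynomially on α₁, α₂, α₃. -/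
open MvPolynomial

/-- In the chart U₁: x₁ = 1/(x+z), y₁ = (yz+α₂)z, z₁ = 1/z, the vector field has
polynomial right-hand sides in (x₁, y₁, z₁, t) with coefficients polynomial in the
parameters (α₁, α₂, α₃). -/
theorem chart_U1_polynomial (α₁ α₂ α₃ : ℂ) (x y z : ℂ → ℂ) (s : Set ℂ)
    (hz0 : ∀ t ∈ s, z t ≠ 0) (hxz0 : ∀ t ∈ s, x t + z t ≠ 0)
    (hx : ∀ t ∈ s, HasDerivAt x (x t * (t - x t - 2 * z t) + α₁) t)
    (hy : ∀ t ∈ s, HasDerivAt y (y t * (-t + y t + 2 * z t) + α₂) t)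
    (hz : ∀ t ∈ s, HasDerivAt z (z t * (t - 2 * y t - z t) + α₃) t) :
    ∃ P₁ P₂ P₃ : MvPolynomial (Fin 7) ℂ, ∀ t ∈ s,
      (let v : Fin 7 → ℂ :=
        ![1 / (x t + z t), (y t * z t + α₂) * z t, 1 / z t, t, α₁, α₂, α₃];
       HasDerivAt (fun τ => 1 / (x τ + z τ)) (MvPolynomial.eval v P₁) t ∧
       HasDerivAt (fun τ => (y τ * z τ + α₂) * z τ) (MvPolynomial.eval v P₂) t ∧
       HasDerivAt (fun τ => 1 / z τ) (MvPolynomial.eval v P₃) t) := by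
  refine ⟨1 - X 3 * X 0 + X 0 ^ 2 * (2 * (X 1 * X 2 - X 5) - X 4 - X 6),
    X 3 * X 1 - 3 * (X 1 * X 2 - X 5) ^ 2 + 2 * X 6 * (X 1 * X 2 - X 5)
      - 2 * X 5 * (X 1 * X 2 - X 5) + X 5 * X 6,
    1 - X 3 * X 2 + 2 * (X 1 * X 2 ^ 3 - X 5 * X 2 ^ 2) - X 6 * X 2 ^ 2, ?_⟩
  intro t ht
  have hz' := hz t ht
  have hx' := hx t ht
  have hy' := hy t ht
  have hzne := hz0 t ht
  have hxzne := hxz0 t ht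
  have e0 : (![1 / (x t + z t), (y t * z t + α₂) * z t, 1 / z t, t, α₁, α₂, α₃] : Fin 7 → ℂ) 0 = 1 / (x t + z t) := rfl
  have e1 : (![1 / (x t + z t), (y t * z t + α₂) * z t, 1 / z t, t, α₁, α₂, α₃] : Fin 7 → ℂ) 1 = (y t * z t + α₂) * z t := rfl
  have e2 : (![1 / (x t + z t), (y t * z t + α₂) * z t, 1 / z t, t, α₁, α₂, α₃] : Fin 7 → ℂ) 2 = 1 / z t := rfl
  have e3 : (![1 / (x t + z t), (y t * z t + α₂) * z t, 1 / z t, t, α₁, α₂, α₃] : Fin 7 → ℂ) 3 = t := rfl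
  have e4 : (![1 / (x t + z t), (y t * z t + α₂) * z t, 1 / z t, t, α₁, α₂, α₃] : Fin 7 → ℂ) 4 = α₁ := rfl
  have e5 : (![1 / (x t + z t), (y t * z t + α₂) * z t, 1 / z t, t, α₁, α₂, α₃] : Fin 7 → ℂ) 5 = α₂ := rfl
  have e6 : (![1 / (x t + z t), (y t * z t + α₂) * z t, 1 / z t, t, α₁, α₂, α₃] : Fin 7 → ℂ) 6 = α₃ := rfl
  simp only [eval_add, eval_sub, eval_mul, eval_pow, eval_X, eval_ofNat,
    e0, e1, e2, e3, e4, e5, e6, map_one]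
  refine ⟨?_, ?_, ?_⟩
  · have h := ((hx'.add hz').inv hxzne)
    simp only [one_div]
    refine h.congr_deriv ?_
    simp only [Pi.add_apply, Pi.mul_apply] at *
    field_simp [hzne, hxzne]
    ring
  · have h := ((hy'.mul hz').add_const α₂).mul hz'
    refine h.congr_deriv ?_
    simp only [Pi.add_apply, Pi.mul_apply] at *
    field_simp [hzne, hxzne]
    ring
  · have h := hz'.inv hzne
    simp only [one_div]
    refine h.congr_deriv ?_
    field_simp [hzne, hxzne]
    ring
end

section
/- Let (x,y,z) satisfy dx/dt = x(t-x-2z)+α₁, dy/dt = y(-t+y+2z)+α₂, dz/dt = z(t-2y-z)+α₃ with y nowhere zero. Define x₅ = 1/x, y₅ = 1/y, z₅ = (yz - α₃)y (assuming also x nowhere zero). Then dx₅/dt, dy₅/dt, dz₅/dt are polynomial expressions in (x₅, y₅, z₅, t) (with coefficients polynomial in α₁, α₂, α₃). -/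
open MvPolynomial

private lemma vec0 {α : Type*} (a b c d e f g : α) : ![a,b,c,d,e,f,g] 0 = a := rfl
private lemma vec1 {α : Type*} (a b c d e f g : α) : ![a,b,c,d,e,f,g] 1 = b := rfl
private lemma vec2 {α : Type*} (a b c d e f g : α) : ![a,b,c,d,e,f,g] 2 = c := rfl
private lemma vec3 {α : Type*} (a b c d e f g : α) : ![a,b,c,d,e,f,g] 3 = d := rfl
private lemma vec4 {α : Type*} (a b c d e f g : α) : ![a,b,c,d,e,f,g] 4 = e := rfl
private lemma vec5 {α : Type*} (a b c d e f g : α) : ![a,b,c,d,e,f,g] 5 = f := rfl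
private lemma vec6 {α : Type*} (a b c d e f g : α) : ![a,b,c,d,e,f,g] 6 = g := rfl

/-- In the chart U₅: x₅ = 1/x, y₅ = 1/y, z₅ = (yz-α₃)y, the vector field has
polynomial right-hand sides in (x₅, y₅, z₅, t) with coefficients polynomial in
(α₁, α₂, α₃). -/
theorem chart_U5_polynomial (α₁ α₂ α₃ : ℂ) (x y z : ℂ → ℂ) (s : Set ℂ)
    (hx0 : ∀ t ∈ s, x t ≠ 0) (hy0 : ∀ t ∈ s, y t ≠ 0)
    (hx : ∀ t ∈ s, HasDerivAt x (x t * (t - x t - 2 * z t) + α₁) t)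
    (hy : ∀ t ∈ s, HasDerivAt y (y t * (-t + y t + 2 * z t) + α₂) t)
    (hz : ∀ t ∈ s, HasDerivAt z (z t * (t - 2 * y t - z t) + α₃) t) :
    ∃ P₁ P₂ P₃ : MvPolynomial (Fin 7) ℂ, ∀ t ∈ s,
      (let v : Fin 7 → ℂ :=
        ![1 / x t, 1 / y t, (y t * z t - α₃) * y t, t, α₁, α₂, α₃];
       HasDerivAt (fun τ => 1 / x τ) (MvPolynomial.eval v P₁) t ∧
       HasDerivAt (fun τ => 1 / y τ) (MvPolynomial.eval v P₂) t ∧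
       HasDerivAt (fun τ => (y τ * z τ - α₃) * y τ) (MvPolynomial.eval v P₃) t) := by
  refine ⟨-(X 3 * X 0) + 1 + 2 * X 0 * (X 2 * X 1 ^ 2 + X 6 * X 1) - X 4 * X 0 ^ 2,
    X 3 * X 1 - 1 - 2 * (X 2 * X 1 ^ 2 + X 6 * X 1) * X 1 - X 5 * X 1 ^ 2,
    -(X 3 * X 2) + 3 * (X 2 * X 1 + X 6) ^ 2 + (2 * X 5 - 2 * X 6) * (X 2 * X 1 + X 6)
      - X 5 * X 6, ?_⟩
  intro t ht
  have hxt := hx t ht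
  have hyt := hy t ht
  have hzt := hz t ht
  have hx0t := hx0 t ht
  have hy0t := hy0 t ht
  have hzx : (y t * z t - α₃) * y t * (y t)⁻¹ ^ 2 + α₃ * (y t)⁻¹ = z t := by
    field_simp; ring
  refine ⟨?_, ?_, ?_⟩
  · have h := hxt.inv hx0t
    have e1 : MvPolynomial.eval
        (![1 / x t, 1 / y t, (y t * z t - α₃) * y t, t, α₁, α₂, α₃] : Fin 7 → ℂ)
        (-(X 3 * X 0) + 1 + 2 * X 0 * (X 2 * X 1 ^ 2 + X 6 * X 1) - X 4 * X 0 ^ 2) =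
        -(t * (1 / x t)) + 1 + 2 * (1 / x t) *
          ((y t * z t - α₃) * y t * (1 / y t) ^ 2 + α₃ * (1 / y t)) - α₁ * (1 / x t) ^ 2 := by
      simp only [map_add, map_sub, map_neg, map_mul, map_pow, map_one, map_ofNat, eval_X, eval_ofNat, vec0, vec1, vec2, vec3, vec4, vec5, vec6]
    simp only [one_div] at e1 ⊢
    rw [e1, hzx]
    refine h.congr_deriv ?_
    field_simp [hx0t]
    ring
  · have h := hyt.inv hy0t
    have e2 : MvPolynomial.eval
        (![1 / x t, 1 / y t, (y t * z t - α₃) * y t, t, α₁, α₂, α₃] : Fin 7 → ℂ)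
        (X 3 * X 1 - 1 - 2 * (X 2 * X 1 ^ 2 + X 6 * X 1) * X 1 - X 5 * X 1 ^ 2) =
        t * (1 / y t) - 1 - 2 *
          ((y t * z t - α₃) * y t * (1 / y t) ^ 2 + α₃ * (1 / y t)) * (1 / y t)
          - α₂ * (1 / y t) ^ 2 := by
      simp only [map_add, map_sub, map_neg, map_mul, map_pow, map_one, map_ofNat, eval_X, eval_ofNat, vec0, vec1, vec2, vec3, vec4, vec5, vec6]
    simp only [one_div] at e2 ⊢
    rw [e2, hzx]
    refine h.congr_deriv ?_
    field_simp [hy0t]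
    ring
  · have h : HasDerivAt (fun τ => (y τ * z τ - α₃) * y τ)
        (((y t * (-t + y t + 2 * z t) + α₂) * z t +
          y t * (z t * (t - 2 * y t - z t) + α₃) - 0) * y t +
         (y t * z t - α₃) * (y t * (-t + y t + 2 * z t) + α₂)) t :=
      (((hyt.mul hzt).sub (hasDerivAt_const t α₃))).mul hyt
    convert h using 1
    simp only [map_add, map_sub, map_neg, map_mul, map_pow, map_one, map_ofNat, eval_X, eval_ofNat, vec0, vec1, vec2, vec3, vec4, vec5, vec6]
    field_simp [hy0t]
    ring
end

section
/- Let (u₁, v₁, w₁) satisfy du₁/dt = 2u₁v₁ + (-u₁ - u₁²)/w₁ + α₁w₁ - α₃u₁w₁, dv₁/dt = -tv₁ + v₁² + 2v₁/w₁ + α₂, dw₁/dt = 1 - tw₁ + 2v₁w₁ - α₃w₁², with w₁ and u₁+1 nowhere zero. Define u₂ = w₁/(u₁+1), v₂ = v₁, w₂ = w₁. Then du₂/dt = 1 - tu₂ + 2u₂²v₂/w₂ - α₁u₂² - α₃u₂², dv₂/dt = -tv₂ + v₂² + 2v₂/w₂ + α₂, dw₂/dt = 1 - tw₂ + 2v₂w₂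 - α₃w₂². -/
private lemma flop_key (α₁ α₃ t v w a : ℂ) (hw : w ≠ 0) (hu : a ≠ 0) :
    1 - t*(w/a) + 2*(w/a)^2*v/w - α₁*(w/a)^2 - α₃*(w/a)^2
      = (a^2 - t*w*a + 2*w*v - α₁*w^2 - α₃*w^2)/a^2 := by
  have hA : a^5 * a⁻¹^5 = 1 := by rw [← mul_pow, mul_inv_cancel₀ hu, one_pow]
  have hB : w * w⁻¹ = 1 := mul_inv_cancel₀ hw
  field_simp

private lemma flop_aux (α₁ α₃ t u v w : ℂ) (hw : w ≠ 0) (hu : u + 1 ≠ 0) :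
    ((1 - t*w + 2*v*w - α₃*w^2)*(u+1) - w*(2*u*v + (-u - u^2)/w + α₁*w - α₃*u*w))/(u+1)^2
      = 1 - t*(w/(u+1)) + 2*(w/(u+1))^2*v/w - α₁*(w/(u+1))^2 - α₃*(w/(u+1))^2 := by
  have e1 : w*(2*u*v + (-u - u^2)/w + α₁*w - α₃*u*w)
      = 2*u*v*w + (-u - u^2) + α₁*w^2 - α₃*u*w^2 := by field_simp
  rw [e1, show (1 - t*w + 2*v*w - α₃*w^2)*(u+1)
        - (2*u*v*w + (-u - u^2) + α₁*w^2 - α₃*u*w^2)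
      = ((u+1)^2 - t*w*(u+1) + 2*w*(v) - α₁*w^2 - α₃*w^2) from by ring]
  exact (flop_key α₁ α₃ t v w (u+1) hw hu).symm


/-- Step 3 (the flop/blow-down): the coordinate change u₂ = w₁/(u₁+1), v₂ = v₁,
w₂ = w₁ transforms the system of Step 2 into system (4). -/
theorem flop_step3 (α₁ α₂ α₃ : ℂ) (u₁ v₁ w₁ : ℂ → ℂ) (s : Set ℂ)
    (hw0 : ∀ t ∈ s, w₁ t ≠ 0) (hu0 : ∀ t ∈ s, u₁ t + 1 ≠ 0)
    (hu : ∀ t ∈ s, HasDerivAt u₁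
      (2 * u₁ t * v₁ t + (-u₁ t - (u₁ t)^2) / w₁ t + α₁ * w₁ t - α₃ * u₁ t * w₁ t) t)
    (hv : ∀ t ∈ s, HasDerivAt v₁
      (-t * v₁ t + (v₁ t)^2 + 2 * v₁ t / w₁ t + α₂) t)
    (hw : ∀ t ∈ s, HasDerivAt w₁
      (1 - t * w₁ t + 2 * v₁ t * w₁ t - α₃ * (w₁ t)^2) t) :
    ∀ t ∈ s,
      (let u₂ := w₁ t / (u₁ t + 1); let v₂ := v₁ t; let w₂ := w₁ t;
       HasDerivAt (fun τ => w₁ τ / (u₁ τ + 1))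
         (1 - t * u₂ + 2 * u₂^2 * v₂ / w₂ - α₁ * u₂^2 - α₃ * u₂^2) t ∧
       HasDerivAt v₁ (-t * v₂ + v₂^2 + 2 * v₂ / w₂ + α₂) t ∧
       HasDerivAt w₁ (1 - t * w₂ + 2 * v₂ * w₂ - α₃ * w₂^2) t) := by
  intro t ht
  have hw0t := hw0 t ht
  have hu0t := hu0 t ht
  refine ⟨?_, hv t ht, hw t ht⟩
  have h := (hw t ht).div ((hu t ht).add_const 1) hu0t
  convert h using 1
  case e'_4 => rfl
  case e'_5 => rfl
  case e'_8 => rfl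
  have := flop_aux α₁ α₃ t (u₁ t) (v₁ t) (w₁ t) hw0t hu0t
  rw [← this]
end

section
/- After the blow-up x₃ = p, y₃ = q/p, z₃ = r/p at the point P₃, the system becomes holomorphic: if (p,q,r) satisfies dp/dt = -α₁p² - tp + 2r + 1, dq/dt = (q + q(-2tp+q+4r))/p + α₂p - α₁pq, dr/dt = (r + r(r-2q))/p - α₁pr + α₃p with p nowhere zero, then (x₃,y₃,z₃) = (p, q/p, r/p) satisfies a system of ODEs whose right-hand sides are polynomials in (x₃, y₃, z₃, t, α₁, α₂, α₃). -/
open MvPolynomial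

/-- Blow-up at P₃: in the coordinates x₃ = p, y₃ = q/p, z₃ = r/p the system has
polynomial right-hand sides in (x₃, y₃, z₃, t, α₁, α₂, α₃). -/
theorem blowup_P3_polynomial (α₁ α₂ α₃ : ℂ) (p q r : ℂ → ℂ) (s : Set ℂ)
    (hp0 : ∀ t ∈ s, p t ≠ 0)
    (hp : ∀ t ∈ s, HasDerivAt p (-α₁ * (p t)^2 - t * p t + 2 * r t + 1) t)
    (hq : ∀ t ∈ s, HasDerivAt q
      ((q t + q t * (-2 * t * p t + q t + 4 * r t)) / p t
        + α₂ * p t - α₁ * p t * q t) t)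
    (hr : ∀ t ∈ s, HasDerivAt r
      ((r t + r t * (r t - 2 * q t)) / p t - α₁ * p t * r t + α₃ * p t) t) :
    ∃ P₁ P₂ P₃ : MvPolynomial (Fin 7) ℂ, ∀ t ∈ s,
      (let v : Fin 7 → ℂ := ![p t, q t / p t, r t / p t, t, α₁, α₂, α₃];
       HasDerivAt p (MvPolynomial.eval v P₁) t ∧
       HasDerivAt (fun τ => q τ / p τ) (MvPolynomial.eval v P₂) t ∧
       HasDerivAt (fun τ => r τ / p τ) (MvPolynomial.eval v P₃) t) := by
  refine ⟨-X 4 * (X 0)^2 - X 3 * X 0 + 2 * X 0 * X 2 + 1,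
          (X 1)^2 + 2 * X 1 * X 2 - X 3 * X 1 + X 5,
          -(X 2)^2 - 2 * X 1 * X 2 + X 3 * X 2 + X 6, ?_⟩
  intro t ht
  have h0 := hp0 t ht
  refine ⟨?_, ?_, ?_⟩
  · convert hp t ht using 1
    simp [Matrix.cons_val_zero]
    field_simp
  · have h : HasDerivAt (fun τ => q τ / p τ) _ t := (hq t ht).div (hp t ht) h0
    convert h using 1
    simp
    field_simp
    ring
  · have h : HasDerivAt (fun τ => r τ / p τ) _ t := (hr t ht).div (hp t ht) h0
    convert h using 1
    simp
    field_simp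
    ring
end
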